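/- Let G be a connected split graph that is not a star, whose vertex set is partitioned into a clique C = {x, y} of size 2 and a nonempty independent set I such that every vertex of I is non-adjacent to at least one vertex of C. Then the 3-coloring assigning color 1 to x, color 2 to y, and color 3 to every vertex of I is a strong conflict-free vertex-connection 3-coloring of G, and svcfc(G) = 3. -/

import Mathlib

open SimpleGraph

lemma walkLen1 {V : Type*} {G : SimpleGraph V} {u v : V} (p : G.Walk u v) (h : p.length = 1) :
    p.support = [u, v] ∧ G.Adj u v := by
  cases p with
  | nil => simp at h
  | cons h1 q =>
    cases q with
    | nil => exact ⟨by simp, h1⟩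
    | cons h2 r => simp [Walk.length_cons] at h

lemma walkLen2 {V : Type*} {G : SimpleGraph V} {u v : V} (p : G.Walk u v) (h : p.length = 2) :
    ∃ w, G.Adj u w ∧ G.Adj w v ∧ p.support = [u, w, v] := by
  cases p with
  | nil => simp at h
  | cons h1 q =>
    cases q with
    | nil => simp at h
    | cons h2 r =>
      cases r with
      | nil => exact ⟨_, h1, h2, by simp⟩
      | cons h3 s => simp [Walk.length_cons] at h

lemma walkLen3 {V : Type*} {G : SimpleGraph V} {u v : V} (p : G.Walk u v) (h : p.length = 3) :
    ∃ w z, G.Adj u w ∧ G.Adj w z ∧ G.Adj z v ∧ p.support = [u, w, z, v] := by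
  cases p with
  | nil => simp at h
  | cons h1 q =>
    cases q with
    | nil => simp at h
    | cons h2 r =>
      cases r with
      | nil => simp at h
      | cons h3 s =>
        cases s with
        | nil => exact ⟨_, _, h1, h2, h3, by simp⟩
        | cons h4 t => simp [Walk.length_cons] at h

lemma countPairNe {α : Type*} [DecidableEq α] {p q c : α} (h : ([p, q] : List α).count c = 1) :
    p ≠ q := by
  rintro rfl
  by_cases hc : p = c <;> simp [List.count_cons, hc] at h

lemma fin2Eq : ∀ u v w : Fin 2, u ≠ v → w ≠ u → w = v := by decide

lemma fin2Count : ∀ u v c : Fin 2, ([v, u, v, u] : List (Fin 2)).count c ≠ 1 := by decide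

/-- `f` is a strong conflict-free vertex-connection coloring of `G`: any two distinct
vertices are joined by a shortest path on which some color occurs exactly once. -/
def IsSCFVC {V α : Type*} [DecidableEq α] (G : SimpleGraph V) (f : V → α) : Prop :=
  ∀ u v : V, u ≠ v → ∃ p : G.Walk u v, p.length = G.dist u v ∧
    ∃ c : α, (p.support.map f).count c = 1

/-- The strong conflict-free vertex-connection number. -/
noncomputable def svcfc {V : Type*} (G : SimpleGraph V) : ℕ :=
  sInf {k | ∃ f : V → Fin k, IsSCFVC G f}

/-- Let `G` be a connected split graph that is not a star, partitioned into the clique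
`{x, y}` and a nonempty independent set `I` whose every vertex misses `x` or `y`. Then
coloring `x` with `1`, `y` with `2` and all of `I` with `3` (here `0, 1, 2 : Fin 3`) is a
strong conflict-free vertex-connection `3`-coloring of `G`, and `svcfc(G) = 3`. -/
theorem stmt16 {V : Type*} [Fintype V] [DecidableEq V] (G : SimpleGraph V)
    (hG : G.Connected) (x y : V) (hxy : x ≠ y) (hadj : G.Adj x y)
    (I : Finset V) (hxI : x ∉ I) (hyI : y ∉ I)
    (huniv : ∀ v : V, v = x ∨ v = y ∨ v ∈ I)
    (hindep : ∀ u ∈ I, ∀ v ∈ I, ¬ G.Adj u v)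
    (hIne : I.Nonempty)
    (hmiss : ∀ u ∈ I, ¬ G.Adj u x ∨ ¬ G.Adj u y)
    (hnotstar : ¬ ∃ z : V, (∀ w : V, w ≠ z → G.Adj z w) ∧
      ∀ w w' : V, w ≠ z → w' ≠ z → w ≠ w' → ¬ G.Adj w w') :
    IsSCFVC G (fun v => if v = x then (0 : Fin 3) else if v = y then 1 else 2) ∧
    svcfc G = 3 := by
  -- every vertex of `I` is adjacent to exactly one of `x`, `y`
  have honly : ∀ u ∈ I, (G.Adj u x ∧ ¬ G.Adj u y) ∨ (G.Adj u y ∧ ¬ G.Adj u x) := by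
    intro u hu
    have hnbr : G.Adj u x ∨ G.Adj u y := by
      obtain ⟨p⟩ := hG.preconnected u x
      cases p with
      | nil => exact absurd hu hxI
      | @cons _ w _ h q =>
        rcases huniv w with rfl | rfl | hw
        · exact Or.inl h
        · exact Or.inr h
        · exact absurd h (hindep u hu w hw)
    rcases hmiss u hu with h | h
    · exact Or.inr ⟨hnbr.resolve_left h, h⟩
    · exact Or.inl ⟨hnbr.resolve_right h, h⟩
  -- existence of a vertex adjacent only to x, and one adjacent only to y
  have hb : ∃ b ∈ I, G.Adj b y ∧ ¬ G.Adj b x := by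
    by_contra hc
    push_neg at hc
    refine hnotstar ⟨x, ?_, ?_⟩
    · intro w hw
      rcases huniv w with rfl | rfl | hw'
      · exact absurd rfl hw
      · exact hadj
      · rcases honly w hw' with ⟨h1, _⟩ | ⟨h1, h2⟩
        · exact h1.symm
        · exact absurd (hc w hw' h1) h2
    · intro w w' hw hw' hne
      rcases huniv w with rfl | rfl | h1 <;> rcases huniv w' with rfl | rfl | h2
      · exact absurd rfl hw
      · exact absurd rfl hw
      · exact absurd rfl hw
      · exact absurd rfl hw'
      · exact absurd rfl hne
      · intro h
        rcases honly w' h2 with ⟨_, h4⟩ | ⟨h3, h4⟩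
        · exact h4 h.symm
        · exact h4 (hc w' h2 h3)
      · exact absurd rfl hw'
      · intro h
        rcases honly w h1 with ⟨_, h4⟩ | ⟨h3, h4⟩
        · exact h4 h
        · exact h4 (hc w h1 h3)
      · exact hindep w h1 w' h2
  have ha : ∃ a ∈ I, G.Adj a x ∧ ¬ G.Adj a y := by
    by_contra hc
    push_neg at hc
    refine hnotstar ⟨y, ?_, ?_⟩
    · intro w hw
      rcases huniv w with rfl | rfl | hw'
      · exact hadj.symm
      · exact absurd rfl hw
      · rcases honly w hw' with ⟨h1, h2⟩ | ⟨h1, _⟩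
        · exact absurd (hc w hw' h1) h2
        · exact h1.symm
    · intro w w' hw hw' hne
      rcases huniv w with rfl | rfl | h1 <;> rcases huniv w' with rfl | rfl | h2
      · exact absurd rfl hne
      · exact absurd rfl hw'
      · intro h
        rcases honly w' h2 with ⟨h3, h4⟩ | ⟨h3, h4⟩
        · exact h4 (hc w' h2 h3)
        · exact h4 h.symm
      · exact absurd rfl hw
      · exact absurd rfl hw
      · exact absurd rfl hw
      · intro h
        rcases honly w h1 with ⟨h3, h4⟩ | ⟨h3, h4⟩
        · exact h4 (hc w h1 h3)
        · exact h4 h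
      · exact absurd rfl hw'
      · exact hindep w h1 w' h2
  -- distance computations
  have hdist2 : ∀ u v : V, u ≠ v → ¬ G.Adj u v → ∀ w, G.Adj u w → G.Adj w v →
      G.dist u v = 2 := by
    intro u v hne hna w h1 h2
    have hle : G.dist u v ≤ 2 := by
      simpa using G.dist_le (Walk.cons h1 (Walk.cons h2 Walk.nil))
    have h0 : 0 < G.dist u v := hG.pos_dist_of_ne hne
    have h1' : G.dist u v ≠ 1 := fun h => hna (dist_eq_one_iff_adj.mp h)
    omega
  have hdist3 : ∀ u v : V, u ≠ v → ¬ G.Adj u v → (∀ w, ¬ (G.Adj u w ∧ G.Adj w v)) →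
      ∀ w z, G.Adj u w → G.Adj w z → G.Adj z v → G.dist u v = 3 := by
    intro u v hne hna hcn w z h1 h2 h3
    have hle : G.dist u v ≤ 3 := by
      simpa using G.dist_le (Walk.cons h1 (Walk.cons h2 (Walk.cons h3 Walk.nil)))
    have h0 : 0 < G.dist u v := hG.pos_dist_of_ne hne
    have h1' : G.dist u v ≠ 1 := fun h => hna (dist_eq_one_iff_adj.mp h)
    have h2' : G.dist u v ≠ 2 := by
      intro h
      obtain ⟨q, hq⟩ := hG.exists_walk_length_eq_dist u v
      rw [h] at hq
      obtain ⟨w', hw1, hw2, _⟩ := walkLen2 q hq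
      exact hcn w' ⟨hw1, hw2⟩
    omega
  set f : V → Fin 3 := fun v => if v = x then (0 : Fin 3) else if v = y then 1 else 2 with hf
  have hfx : f x = 0 := by simp [hf]
  have hfy : f y = 1 := by simp [hf, Ne.symm hxy]
  have hfI : ∀ u ∈ I, f u = 2 := by
    intro u hu
    have h1 : u ≠ x := fun h => hxI (h ▸ hu)
    have h2 : u ≠ y := fun h => hyI (h ▸ hu)
    simp [hf, h1, h2]
  -- symmetry of the SCFVC condition for a fixed pair
  have hsymm : ∀ u v : V,
      (∃ p : G.Walk u v, p.length = G.dist u v ∧ ∃ c : Fin 3, (p.support.map f).count c = 1) →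
      (∃ p : G.Walk v u, p.length = G.dist v u ∧ ∃ c : Fin 3, (p.support.map f).count c = 1) := by
    rintro u v ⟨p, hl, c, hc⟩
    refine ⟨p.reverse, by simp [hl, G.dist_comm], c, ?_⟩
    simpa [Walk.support_reverse, List.map_reverse, List.count_reverse] using hc
  have main : IsSCFVC G f := by
    have keyxv : ∀ v ∈ I, ∃ p : G.Walk x v, p.length = G.dist x v ∧
        ∃ c : Fin 3, (p.support.map f).count c = 1 := by
      intro v hv
      have hne : x ≠ v := fun h => hxI (h ▸ hv)
      by_cases hx : G.Adj x v
      · refine ⟨Walk.cons hx Walk.nil, by simp [dist_eq_one_iff_adj.mpr hx], 0, ?_⟩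
        simp [hfx, hfI v hv]
      · have hvy : G.Adj y v := by
          rcases honly v hv with ⟨h1, _⟩ | ⟨h1, _⟩
          · exact absurd h1.symm hx
          · exact h1.symm
        refine ⟨Walk.cons hadj (Walk.cons hvy Walk.nil),
          by simp [hdist2 x v hne hx y hadj hvy], 0, ?_⟩
        simp [hfx, hfy, hfI v hv]
    have keyyv : ∀ v ∈ I, ∃ p : G.Walk y v, p.length = G.dist y v ∧
        ∃ c : Fin 3, (p.support.map f).count c = 1 := by
      intro v hv
      have hne : y ≠ v := fun h => hyI (h ▸ hv)
      by_cases hy : G.Adj y v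
      · refine ⟨Walk.cons hy Walk.nil, by simp [dist_eq_one_iff_adj.mpr hy], 1, ?_⟩
        simp [hfy, hfI v hv]
      · have hvx : G.Adj x v := by
          rcases honly v hv with ⟨h1, _⟩ | ⟨h1, _⟩
          · exact h1.symm
          · exact absurd h1.symm hy
        refine ⟨Walk.cons hadj.symm (Walk.cons hvx Walk.nil),
          by simp [hdist2 y v hne hy x hadj.symm hvx], 1, ?_⟩
        simp [hfx, hfy, hfI v hv]
    have keyvv : ∀ u ∈ I, ∀ v ∈ I, u ≠ v → ∃ p : G.Walk u v, p.length = G.dist u v ∧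
        ∃ c : Fin 3, (p.support.map f).count c = 1 := by
      intro u hu v hv hne
      have hna : ¬ G.Adj u v := hindep u hu v hv
      rcases honly u hu with ⟨h1, h2⟩ | ⟨h1, h2⟩ <;>
        rcases honly v hv with ⟨h3, h4⟩ | ⟨h3, h4⟩
      · refine ⟨Walk.cons h1 (Walk.cons h3.symm Walk.nil),
          by simp [hdist2 u v hne hna x h1 h3.symm], 0, ?_⟩
        simp [hfx, hfI u hu, hfI v hv]
      · have hcn : ∀ w, ¬ (G.Adj u w ∧ G.Adj w v) := by
          rintro w ⟨hw1, hw2⟩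
          rcases huniv w with rfl | rfl | hw
          · exact h4 hw2.symm
          · exact h2 hw1
          · exact hindep u hu w hw hw1
        refine ⟨Walk.cons h1 (Walk.cons hadj (Walk.cons h3.symm Walk.nil)),
          by simp [hdist3 u v hne hna hcn x y h1 hadj h3.symm], 0, ?_⟩
        simp [hfx, hfy, hfI u hu, hfI v hv]
      · have hcn : ∀ w, ¬ (G.Adj u w ∧ G.Adj w v) := by
          rintro w ⟨hw1, hw2⟩
          rcases huniv w with rfl | rfl | hw
          · exact h2 hw1
          · exact h4 hw2.symm
          · exact hindep u hu w hw hw1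
        refine ⟨Walk.cons h1 (Walk.cons hadj.symm (Walk.cons h3.symm Walk.nil)),
          by simp [hdist3 u v hne hna hcn y x h1 hadj.symm h3.symm], 0, ?_⟩
        simp [hfx, hfy, hfI u hu, hfI v hv]
      · refine ⟨Walk.cons h1 (Walk.cons h3.symm Walk.nil),
          by simp [hdist2 u v hne hna y h1 h3.symm], 1, ?_⟩
        simp [hfy, hfI u hu, hfI v hv]
    have keyxy : ∃ p : G.Walk x y, p.length = G.dist x y ∧
        ∃ c : Fin 3, (p.support.map f).count c = 1 := by
      refine ⟨Walk.cons hadj Walk.nil, by simp [dist_eq_one_iff_adj.mpr hadj], 0, ?_⟩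
      simp [hfx, hfy]
    intro u v hne
    rcases huniv u with rfl | rfl | hu <;> rcases huniv v with rfl | rfl | hv
    · exact absurd rfl hne
    · exact keyxy
    · exact keyxv v hv
    · exact hsymm _ _ keyxy
    · exact absurd rfl hne
    · exact keyyv v hv
    · exact hsymm _ _ (keyxv u hu)
    · exact hsymm _ _ (keyyv u hu)
    · exact keyvv u hu v hv hne
  refine ⟨main, ?_⟩
  have hmem : 3 ∈ {k | ∃ g : V → Fin k, IsSCFVC G g} := ⟨f, main⟩
  refine le_antisymm (Nat.sInf_le hmem) (le_csInf ⟨3, hmem⟩ ?_)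
  rintro k ⟨g, hg⟩
  by_contra hk
  push_neg at hk
  have hk2 : k ≤ 2 := by omega
  obtain ⟨a, haI, hax, hay⟩ := ha
  obtain ⟨b, hbI, hby, hbx⟩ := hb
  -- from the pair (x, y): g x ≠ g y
  have gxy : g x ≠ g y := by
    obtain ⟨p, hl, c, hc⟩ := hg x y hxy
    rw [dist_eq_one_iff_adj.mpr hadj] at hl
    obtain ⟨hs, _⟩ := walkLen1 p hl
    rw [hs] at hc
    exact countPairNe hc
  have hkk : k = 2 := by
    have h1 : (g x).val < k := (g x).isLt
    have h2 : (g y).val < k := (g y).isLt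
    have h3 : (g x).val ≠ (g y).val := fun h => gxy (Fin.ext h)
    omega
  subst hkk
  -- from the pair (x, a): g x ≠ g a
  have gxa : g x ≠ g a := by
    obtain ⟨p, hl, c, hc⟩ := hg x a (fun h => hxI (h ▸ haI))
    rw [dist_eq_one_iff_adj.mpr hax.symm] at hl
    obtain ⟨hs, _⟩ := walkLen1 p hl
    rw [hs] at hc
    exact countPairNe hc
  have gyb : g y ≠ g b := by
    obtain ⟨p, hl, c, hc⟩ := hg y b (fun h => hyI (h ▸ hbI))
    rw [dist_eq_one_iff_adj.mpr hby.symm] at hl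
    obtain ⟨hs, _⟩ := walkLen1 p hl
    rw [hs] at hc
    exact countPairNe hc
  have gay : g a = g y := fin2Eq (g x) (g y) (g a) gxy (fun h => gxa h.symm)
  have gbx : g b = g x := fin2Eq (g y) (g x) (g b) (Ne.symm gxy) (fun h => gyb h.symm)
  -- the pair (a, b) has a unique shortest path a - x - y - b
  have hab : a ≠ b := fun h => hbx (h ▸ hax)
  have hnab : ¬ G.Adj a b := hindep a haI b hbI
  have hcn : ∀ w, ¬ (G.Adj a w ∧ G.Adj w b) := by
    rintro w ⟨hw1, hw2⟩
    rcases huniv w with rfl | rfl | hw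
    · exact hbx hw2.symm
    · exact hay hw1
    · exact hindep a haI w hw hw1
  have hd3 : G.dist a b = 3 := hdist3 a b hab hnab hcn x y hax hadj hby.symm
  obtain ⟨p, hl, c, hc⟩ := hg a b hab
  rw [hd3] at hl
  obtain ⟨w, z, hw1, hw2, hw3, hs⟩ := walkLen3 p hl
  have hwx : w = x := by
    rcases huniv w with rfl | rfl | hw
    · rfl
    · exact absurd hw1 hay
    · exact absurd hw1 (hindep a haI w hw)
  have hzy : z = y := by
    rcases huniv z with rfl | rfl | hz
    · exact absurd hw3.symm hbx
    · rfl
    · exact absurd hw3 (fun h => hindep z hz b hbI h)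
  rw [hs] at hc
  rw [hwx, hzy] at hc
  simp only [List.map_cons, List.map_nil, gay, gbx] at hc
  exact fin2Count (g x) (g y) c hc
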